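/- arXiv:1311.2242 — 3 statements merged into one kernel-verified Lean document; each statement's English description precedes it below -/
import Mathlib

section
/- Let p be an odd prime. Then W_p ≡ ∑_{a=1}^{p−1} q_p(a) − p·∑_{a=1}^{p−1} H_a·q_p(a) + (p²/2)·∑_{a=1}^{p−1} H_a²·q_p(a) − (p²/2)·∑_{a=1}^{p−1} H_{a,2}·q_p(a) (mod p³) as rational numbers. -/
open Finset

/-- `x ≡ y (mod p^k)` for rationals: `x - y = p^k * (c/d)` with `p ∤ d`. -/
def ratCongr (p k : ℕ) (x y : ℚ) : Prop :=
  ∃ c d : ℤ, ¬ (p : ℤ) ∣ d ∧ x - y = (p : ℚ) ^ k * ((c : ℚ) / (d : ℚ))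

/-- The Wilson quotient `W_p = ((p-1)! + 1)/p` (an integer by Wilson's theorem). -/
def wilsonQuotient (p : ℕ) : ℤ := ((Nat.factorial (p - 1) : ℤ) + 1) / p

/-- The Fermat quotient `q_p(a) = (a^(p-1) - 1)/p` (an integer for `p ∤ a`). -/
def fermatQuotient (p a : ℕ) : ℤ := ((a : ℤ) ^ (p - 1) - 1) / p

/-- A prime `p` is a Wilson prime if `p ∣ W_p`. -/
def IsWilsonPrime (p : ℕ) : Prop := (p : ℤ) ∣ wilsonQuotient p

/-- A prime `p` is a Lerch prime if `∑_{a=1}^{p-1} q_p(a) ≡ W_p (mod p²)`. -/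
def IsLerchPrime (p : ℕ) : Prop :=
  (p : ℤ) ^ 2 ∣ (∑ a ∈ Icc 1 (p - 1), fermatQuotient p a) - wilsonQuotient p

/-- The harmonic number `H_a = ∑_{k=1}^{a} 1/k`. -/
def harmonicNum (a : ℕ) : ℚ := ∑ k ∈ Icc 1 a, (1 : ℚ) / k

/-- The generalized harmonic number `H_{a,2} = ∑_{k=1}^{a} 1/k²`. -/
def harmonicNum2 (a : ℕ) : ℚ := ∑ k ∈ Icc 1 a, (1 : ℚ) / (k : ℚ) ^ 2

/-- p-integral rationals: expressible as c/d with p ∤ d. -/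
def Pint (p : ℕ) (x : ℚ) : Prop := ∃ c d : ℤ, ¬ (p:ℤ) ∣ d ∧ x = (c:ℚ)/(d:ℚ)

variable {p : ℕ}

lemma not_dvd_one' (hp : p.Prime) : ¬ (p:ℤ) ∣ (1:ℤ) := by
  rw [show ((1:ℤ)) = ((1:ℕ):ℤ) by norm_num, Int.natCast_dvd_natCast, Nat.dvd_one]
  exact hp.ne_one

lemma pint_int (hp : p.Prime) (n : ℤ) : Pint p (n : ℚ) :=
  ⟨n, 1, not_dvd_one' hp, by norm_num⟩

lemma pint_zero (hp : p.Prime) : Pint p 0 := by simpa using pint_int hp 0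

lemma pint_add (hp : p.Prime) {x y : ℚ} (hx : Pint p x) (hy : Pint p y) :
    Pint p (x + y) := by
  obtain ⟨c1, d1, h1, e1⟩ := hx
  obtain ⟨c2, d2, h2, e2⟩ := hy
  refine ⟨c1 * d2 + c2 * d1, d1 * d2, ?_, ?_⟩
  · intro h
    rcases (Int.Prime.dvd_mul' (by exact_mod_cast hp) h) with h | h
    exacts [h1 h, h2 h]
  · have hd1' : d1 ≠ 0 := fun h => h1 (by simp [h])
    have hd2' : d2 ≠ 0 := fun h => h2 (by simp [h])
    have hd1 : (d1:ℚ) ≠ 0 := by exact_mod_cast hd1'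
    have hd2 : (d2:ℚ) ≠ 0 := by exact_mod_cast hd2'
    rw [e1, e2]; push_cast; field_simp

lemma pint_mul (hp : p.Prime) {x y : ℚ} (hx : Pint p x) (hy : Pint p y) :
    Pint p (x * y) := by
  obtain ⟨c1, d1, h1, e1⟩ := hx
  obtain ⟨c2, d2, h2, e2⟩ := hy
  refine ⟨c1 * c2, d1 * d2, ?_, ?_⟩
  · intro h
    rcases (Int.Prime.dvd_mul' (by exact_mod_cast hp) h) with h | h
    exacts [h1 h, h2 h]
  · rw [e1, e2]; push_cast; ring

lemma pint_neg (hp : p.Prime) {x : ℚ} (hx : Pint p x) : Pint p (-x) := by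
  have := pint_mul hp (pint_int hp (-1)) hx
  simpa using this

lemma pint_sub (hp : p.Prime) {x y : ℚ} (hx : Pint p x) (hy : Pint p y) :
    Pint p (x - y) := by
  simpa [sub_eq_add_neg] using pint_add hp hx (pint_neg hp hy)

lemma pint_natinv (hp : p.Prime) {k : ℕ} (hk : ¬ p ∣ k) : Pint p (1 / (k:ℚ)) :=
  ⟨1, k, by exact_mod_cast hk, by push_cast; ring⟩

lemma pint_sum (hp : p.Prime) {s : Finset ℕ} {f : ℕ → ℚ}
    (h : ∀ a ∈ s, Pint p (f a)) : Pint p (∑ a ∈ s, f a) := by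
  classical
  induction s using Finset.induction with
  | empty => simpa using pint_zero hp
  | insert _ _ hnot ih =>
    rw [Finset.sum_insert hnot]
    exact pint_add hp (h _ (Finset.mem_insert_self _ _))
      (ih fun a ha => h a (Finset.mem_insert_of_mem ha))

def Sq (n m : ℕ) : ℚ := ∑ k ∈ range (n+1), (-1:ℚ)^k * (n.choose k) * (k:ℚ)^m

lemma Sq_rec (n m : ℕ) :
    Sq (n+1) m = Sq n m - ∑ i ∈ range (m+1), (m.choose i : ℚ) * Sq n i := by
  have hA : ∑ k ∈ range (n+1), (-1:ℚ)^k * (n.choose k) * ((k:ℚ)+1)^m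
      = ∑ i ∈ range (m+1), (m.choose i : ℚ) * Sq n i := by
    have expand : ∀ k : ℕ, (-1:ℚ)^k * (n.choose k) * ((k:ℚ)+1)^m
        = ∑ i ∈ range (m+1), (m.choose i : ℚ) * ((-1:ℚ)^k * (n.choose k) * (k:ℚ)^i) := by
      intro k
      rw [show ((k:ℚ)+1)^m = ∑ i ∈ range (m+1), (k:ℚ)^i * (m.choose i) by
        simpa using add_pow (k:ℚ) 1 m, Finset.mul_sum]
      exact Finset.sum_congr rfl fun i _ => by ring
    rw [Finset.sum_congr rfl fun k _ => expand k, Finset.sum_comm]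
    exact Finset.sum_congr rfl fun i _ => by rw [Sq, Finset.mul_sum]
  -- B : the shifted-binomial part
  have hB : ∑ k ∈ range (n+1), (-1:ℚ)^(k+1) * (n.choose (k+1)) * ((k:ℚ)+1)^m
      = Sq n m - (0:ℚ)^m := by
    have h1 : ∑ j ∈ range (n+2), (-1:ℚ)^j * (n.choose j) * (j:ℚ)^m
        = (∑ k ∈ range (n+1), (-1:ℚ)^(k+1) * (n.choose (k+1)) * ((k:ℚ)+1)^m)
          + (0:ℚ)^m := by
      rw [Finset.sum_range_succ' (fun j => (-1:ℚ)^j * (n.choose j) * (j:ℚ)^m) (n+1)]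
      push_cast
      norm_num
    have h2 : ∑ j ∈ range (n+2), (-1:ℚ)^j * (n.choose j) * (j:ℚ)^m = Sq n m := by
      rw [Finset.sum_range_succ, Sq]
      simp [Nat.choose_succ_self]
    rw [h2] at h1
    linarith [h1]
  have hS : Sq (n+1) m
      = (∑ k ∈ range (n+1), (-1:ℚ)^(k+1) * ((n+1).choose (k+1)) * ((k:ℚ)+1)^m)
        + (0:ℚ)^m := by
    rw [Sq, Finset.sum_range_succ' (fun k => (-1:ℚ)^k * ((n+1).choose k) * (k:ℚ)^m) (n+1)]
    push_cast
    norm_num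
  have hsplit : ∀ k : ℕ, (-1:ℚ)^(k+1) * ((n+1).choose (k+1)) * ((k:ℚ)+1)^m
      = -((-1:ℚ)^k * (n.choose k) * ((k:ℚ)+1)^m)
        + (-1:ℚ)^(k+1) * (n.choose (k+1)) * ((k:ℚ)+1)^m := by
    intro k
    rw [Nat.choose_succ_succ]
    push_cast
    ring
  rw [hS, Finset.sum_congr rfl fun k _ => hsplit k, Finset.sum_add_distrib,
    Finset.sum_neg_distrib, hA, hB]
  ring

lemma Sq_lt : ∀ n m : ℕ, m < n → Sq n m = 0 := by
  intro n
  induction n with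
  | zero => intro m hm; omega
  | succ n ih =>
    intro m hm
    rw [Sq_rec]
    rcases lt_or_eq_of_le (Nat.lt_succ_iff.mp hm) with h | h
    · rw [ih m h, Finset.sum_eq_zero fun i hi => by
        rw [ih i (lt_of_le_of_lt (Nat.lt_succ_iff.mp (Finset.mem_range.mp hi)) h), mul_zero]]
      ring
    · subst h
      rw [Finset.sum_range_succ, Finset.sum_eq_zero fun i hi =>
        by rw [ih i (Finset.mem_range.mp hi), mul_zero]]
      simp

lemma Sq_diag : ∀ n : ℕ, Sq n n = (-1:ℚ)^n * (Nat.factorial n) := by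
  intro n
  induction n with
  | zero => simp [Sq]
  | succ n ih =>
    rw [Sq_rec, Finset.sum_range_succ, Finset.sum_range_succ,
      Finset.sum_eq_zero fun i hi => by
        rw [Sq_lt n i (Finset.mem_range.mp hi), mul_zero]]
    rw [ih]
    rw [Nat.choose_succ_self_right, Nat.choose_self, Nat.factorial_succ]
    push_cast
    ring
lemma prod_eq_choose (p : ℕ) (hp : 1 ≤ p) :
    ∀ a : ℕ, a ≤ p - 1 →
      ∏ k ∈ Icc 1 a, (1 - (p:ℚ)/k) = (-1:ℚ)^a * ((p-1).choose a) := by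
  intro a
  induction a with
  | zero => simp
  | succ a ih =>
    intro ha
    have ha' : a ≤ p - 1 := le_trans (Nat.le_succ a) ha
    rw [Finset.prod_Icc_succ_top (by omega : 1 ≤ a + 1), ih ha']
    have hc : ((p-1).choose (a+1) : ℚ) * ((a:ℚ)+1) = ((p-1).choose a) * ((p:ℚ) - 1 - a) := by
      have h := Nat.choose_succ_right_eq (p-1) a
      have h2 := congrArg (fun x : ℕ => (x:ℚ)) h
      push_cast [Nat.cast_sub (by omega : a ≤ p - 1), Nat.cast_sub (by omega : 1 ≤ p)] at h2
      linarith [h2]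
    have hb : ((a:ℚ)+1) ≠ 0 := by positivity
    push_cast
    rw [pow_succ]
    field_simp
    linear_combination hc

lemma key_expand (hp : p.Prime) (hodd : Odd p) :
    ∀ a : ℕ, a ≤ p - 1 →
      ∃ r : ℚ, Pint p r ∧
        ∏ k ∈ Icc 1 a, (1 - (p:ℚ)/k)
          = 1 - p * harmonicNum a
            + (p:ℚ)^2/2 * ((harmonicNum a)^2 - harmonicNum2 a) + (p:ℚ)^3 * r := by
  intro a
  induction a with
  | zero =>
    intro _
    exact ⟨0, pint_zero hp, by simp [harmonicNum, harmonicNum2]⟩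
  | succ a ih =>
    intro ha
    have ha' : a ≤ p - 1 := le_trans (Nat.le_succ a) ha
    obtain ⟨r, hr, he⟩ := ih ha'
    have hklt : ∀ k : ℕ, 1 ≤ k → k ≤ p - 1 → ¬ p ∣ k := by
      intro k h1 h2 hdvd
      have := Nat.le_of_dvd (by omega) hdvd
      omega
    have hP : Pint p (harmonicNum a) :=
      pint_sum hp fun k hk => by
        rw [Finset.mem_Icc] at hk
        exact pint_natinv hp (hklt k hk.1 (le_trans hk.2 ha'))
    have hP2 : Pint p (harmonicNum2 a) :=
      pint_sum hp fun k hk => by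
        rw [Finset.mem_Icc] at hk
        have := pint_natinv hp (hklt k hk.1 (le_trans hk.2 ha'))
        have h2 := pint_mul hp this this
        refine ⟨h2.choose, h2.choose_spec.choose, h2.choose_spec.choose_spec.1, ?_⟩
        have := h2.choose_spec.choose_spec.2
        rw [← this]; ring
    have hhalf : Pint p (1/(2:ℚ)) := by
      have : ¬ p ∣ 2 := by
        intro h
        have h1 := Nat.le_of_dvd (by norm_num) h
        have h2 := hp.two_le
        have h3 := Nat.odd_iff.mp hodd
        omega
      simpa using pint_natinv hp (k := 2) this
    have hsucc : Pint p (1/((a:ℚ)+1)) := by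
      have : ¬ p ∣ (a+1) := hklt (a+1) (by omega) ha
      simpa [Nat.cast_add] using pint_natinv hp this
    have hpq : Pint p ((p:ℚ)) := by simpa using pint_int hp (p:ℤ)
    set h : ℚ := 1/((a:ℚ)+1) with hh
    refine ⟨r - h * ((harmonicNum a)^2 - harmonicNum2 a) * (1/2) - (p:ℚ) * h * r, ?_, ?_⟩
    · have hPP : Pint p ((harmonicNum a)^2) := by
        rw [pow_two]; exact pint_mul hp hP hP
      exact pint_sub hp (pint_sub hp hr
        (pint_mul hp (pint_mul hp hsucc (pint_sub hp hPP hP2)) hhalf))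
        (pint_mul hp (pint_mul hp hpq hsucc) hr)
    · have hne : ((a:ℚ)+1) ≠ 0 := by positivity
      rw [Finset.prod_Icc_succ_top (by omega : 1 ≤ a + 1), he]
      have hH : harmonicNum (a+1) = harmonicNum a + h := by
        rw [harmonicNum, harmonicNum, Finset.sum_Icc_succ_top (by omega : 1 ≤ a + 1), hh]
        push_cast; ring
      have hH2 : harmonicNum2 (a+1) = harmonicNum2 a + h^2 := by
        rw [harmonicNum2, harmonicNum2, Finset.sum_Icc_succ_top (by omega : 1 ≤ a + 1), hh]
        push_cast
        rw [div_pow]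
        ring_nf
      rw [hH, hH2]
      have hcast : ((a:ℚ)+1) * h = 1 := by rw [hh]; field_simp
      push_cast
      rw [hh]; field_simp
      ring

lemma icc_sum_eq (n : ℕ) (f : ℕ → ℚ) :
    ∑ k ∈ Icc 1 n, f k = (∑ k ∈ range (n+1), f k) - f 0 := by
  rw [show Icc 1 n = Ico 1 (n+1) by rw [Finset.Ico_add_one_right_eq_Icc],
    Finset.sum_Ico_eq_sum_range, Finset.sum_range_succ' f n]
  simp [Nat.add_comm]

lemma wilson_id (hp : p.Prime) (hodd : Odd p) :
    (wilsonQuotient p : ℚ)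
      = ∑ a ∈ Icc 1 (p-1), (-1:ℚ)^a * ((p-1).choose a) * (fermatQuotient p a : ℚ) := by
  haveI : Fact p.Prime := ⟨hp⟩
  set n := p - 1 with hn
  have hp2 : 2 ≤ p := hp.two_le
  have hp3 : 3 ≤ p := by
    by_contra h
    have hpe : p = 2 := by omega
    rw [hpe] at hodd
    exact absurd hodd (by decide)
  have hn2 : 2 ≤ n := by omega
  have hneven : Even n := Nat.Odd.sub_odd hodd odd_one
  have hpQ : (p:ℚ) ≠ 0 := by positivity
  -- Wilson's theorem
  have hW : (p:ℤ) ∣ ((Nat.factorial (p-1) : ℤ) + 1) := by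
    have h := ZMod.wilsons_lemma p
    have : (((Nat.factorial (p-1) : ℤ) + 1 : ℤ) : ZMod p) = 0 := by
      push_cast
      rw [h]; ring
    exact_mod_cast (ZMod.intCast_zmod_eq_zero_iff_dvd _ p).mp this
  have hWq : (wilsonQuotient p : ℚ) * p = (Nat.factorial n : ℚ) + 1 := by
    have h2 : (wilsonQuotient p) * (p:ℤ) = (Nat.factorial (p-1) : ℤ) + 1 :=
      Int.ediv_mul_cancel hW
    have := congrArg (fun x : ℤ => (x:ℚ)) h2
    push_cast at this
    rw [hn]
    linarith [this]
  -- Fermat's little theorem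
  have hFq : ∀ a ∈ Icc 1 n, (fermatQuotient p a : ℚ) * p = (a:ℚ)^n - 1 := by
    intro a ha
    rw [Finset.mem_Icc] at ha
    have hnd : ¬ p ∣ a := by
      intro h
      have := Nat.le_of_dvd (by omega) h
      omega
    have haz : (a : ZMod p) ≠ 0 := by
      rw [Ne, ZMod.natCast_eq_zero_iff]
      exact hnd
    have hF : (p:ℤ) ∣ ((a:ℤ)^(p-1) - 1) := by
      have h := ZMod.pow_card_sub_one_eq_one haz
      have : (((a:ℤ)^(p-1) - 1 : ℤ) : ZMod p) = 0 := by
        push_cast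
        rw [h]; ring
      exact_mod_cast (ZMod.intCast_zmod_eq_zero_iff_dvd _ p).mp this
    have h2 : (fermatQuotient p a) * (p:ℤ) = (a:ℤ)^(p-1) - 1 :=
      Int.ediv_mul_cancel hF
    have := congrArg (fun x : ℤ => (x:ℚ)) h2
    push_cast at this
    rw [hn]
    linarith [this]
  -- the finite-difference identity
  have hsum : ∑ a ∈ Icc 1 n, (-1:ℚ)^a * ((p-1).choose a) * ((a:ℚ)^n - 1)
      = (Nat.factorial n : ℚ) + 1 := by
    have e1 : ∑ a ∈ Icc 1 n, (-1:ℚ)^a * (n.choose a) * (a:ℚ)^n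
        = Sq n n := by
      rw [icc_sum_eq n (fun a => (-1:ℚ)^a * (n.choose a) * (a:ℚ)^n), ← Sq]
      rw [show ((0:ℕ):ℚ)^n = 0 by
        rw [Nat.cast_zero]; exact zero_pow (by omega)]
      ring_nf
    have e2 : ∑ a ∈ Icc 1 n, (-1:ℚ)^a * (n.choose a) = -1 := by
      have : ∑ a ∈ Icc 1 n, (-1:ℚ)^a * (n.choose a)
          = (∑ a ∈ Icc 1 n, (-1:ℚ)^a * (n.choose a) * (a:ℚ)^0) := by
        exact Finset.sum_congr rfl fun a _ => by rw [pow_zero, mul_one]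
      rw [this, icc_sum_eq n (fun a => (-1:ℚ)^a * (n.choose a) * (a:ℚ)^0), ← Sq,
        Sq_lt n 0 (by omega)]
      norm_num
    have split : ∑ a ∈ Icc 1 n, (-1:ℚ)^a * (n.choose a) * ((a:ℚ)^n - 1)
        = (∑ a ∈ Icc 1 n, (-1:ℚ)^a * (n.choose a) * (a:ℚ)^n)
          - ∑ a ∈ Icc 1 n, (-1:ℚ)^a * (n.choose a) := by
      rw [← Finset.sum_sub_distrib]
      exact Finset.sum_congr rfl fun a _ => by ring
    rw [split, e1, e2, Sq_diag, hneven.neg_one_pow]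
    ring
  -- combine
  have key : (∑ a ∈ Icc 1 n, (-1:ℚ)^a * ((p-1).choose a) * (fermatQuotient p a : ℚ)) * p
      = (wilsonQuotient p : ℚ) * p := by
    rw [Finset.sum_mul, hWq, ← hsum]
    refine Finset.sum_congr rfl fun a ha => ?_
    rw [← hFq a ha]
    ring
  have := mul_right_cancel₀ hpQ key
  linarith [this]

lemma pint_sum3 (hp : p.Prime) (s : Finset ℕ) (f : ℕ → ℚ)
    (h : ∀ a ∈ s, ∃ r : ℚ, Pint p r ∧ f a = (p:ℚ)^3 * r) :
    ∃ r : ℚ, Pint p r ∧ ∑ a ∈ s, f a = (p:ℚ)^3 * r := by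
  classical
  induction s using Finset.induction with
  | empty => exact ⟨0, pint_zero hp, by simp⟩
  | insert _ _ hnot ih =>
    obtain ⟨r1, hr1, he1⟩ := h _ (Finset.mem_insert_self _ _)
    obtain ⟨r2, hr2, he2⟩ := ih fun a ha => h a (Finset.mem_insert_of_mem ha)
    exact ⟨r1 + r2, pint_add hp hr1 hr2, by
      rw [Finset.sum_insert hnot, he1, he2]; ring⟩

theorem stmt_13 (p : ℕ) (hp : p.Prime) (hodd : Odd p) :
    ratCongr p 3 ((wilsonQuotient p : ℚ))
      ((∑ a ∈ Icc 1 (p - 1), ((fermatQuotient p a : ℚ)))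
        - (p : ℚ) * ∑ a ∈ Icc 1 (p - 1), harmonicNum a * (fermatQuotient p a : ℚ)
        + (p : ℚ) ^ 2 / 2 * ∑ a ∈ Icc 1 (p - 1), (harmonicNum a) ^ 2 * (fermatQuotient p a : ℚ)
        - (p : ℚ) ^ 2 / 2 * ∑ a ∈ Icc 1 (p - 1), harmonicNum2 a * (fermatQuotient p a : ℚ)) := by
  have hp1 : 1 ≤ p := hp.one_lt.le
  have hcomb : (∑ a ∈ Icc 1 (p - 1), ((fermatQuotient p a : ℚ)))
        - (p : ℚ) * ∑ a ∈ Icc 1 (p - 1), harmonicNum a * (fermatQuotient p a : ℚ)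
        + (p : ℚ) ^ 2 / 2 * ∑ a ∈ Icc 1 (p - 1), (harmonicNum a) ^ 2 * (fermatQuotient p a : ℚ)
        - (p : ℚ) ^ 2 / 2 * ∑ a ∈ Icc 1 (p - 1), harmonicNum2 a * (fermatQuotient p a : ℚ)
      = ∑ a ∈ Icc 1 (p - 1), (fermatQuotient p a : ℚ)
          * (1 - (p:ℚ) * harmonicNum a
             + (p:ℚ)^2/2 * ((harmonicNum a)^2 - harmonicNum2 a)) := by
    rw [Finset.mul_sum, Finset.mul_sum, Finset.mul_sum, ← Finset.sum_sub_distrib,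
      ← Finset.sum_add_distrib, ← Finset.sum_sub_distrib]
    exact Finset.sum_congr rfl fun a _ => by ring
  have hterm : ∀ a ∈ Icc 1 (p - 1), ∃ r : ℚ, Pint p r ∧
      (-1:ℚ)^a * ((p-1).choose a) * (fermatQuotient p a : ℚ)
        - (fermatQuotient p a : ℚ)
          * (1 - (p:ℚ) * harmonicNum a
             + (p:ℚ)^2/2 * ((harmonicNum a)^2 - harmonicNum2 a))
        = (p:ℚ)^3 * r := by
    intro a ha
    rw [Finset.mem_Icc] at ha
    obtain ⟨r, hr, he⟩ := key_expand hp hodd a ha.2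
    rw [prod_eq_choose p hp1 a ha.2] at he
    exact ⟨(fermatQuotient p a : ℚ) * r,
      pint_mul hp (pint_int hp (fermatQuotient p a)) hr, by rw [he]; ring⟩
  obtain ⟨r, hr, he⟩ := pint_sum3 hp (Icc 1 (p-1)) _ hterm
  obtain ⟨c, d, hd, hcd⟩ := hr
  refine ⟨c, d, hd, ?_⟩
  rw [hcomb, wilson_id hp hodd, ← Finset.sum_sub_distrib, he, hcd]
end

section
/- Let p be an odd prime. Then W_p ≡ ∑_{a=1}^{p−1} q_p(a) − p·∑_{a=1}^{p−1} H_a·q_p(a) (mod p²) as rational numbers. -/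
open Finset

lemma altsum : ∀ n : ℕ, ∀ m : ℕ, m ≤ n →
    ∑ a ∈ range (n+1), (-1:ℤ)^a * n.choose a * (a:ℤ)^m
      = if m = n then (-1:ℤ)^n * (n.factorial : ℤ) else 0 := by
  intro n
  induction n with
  | zero =>
    intro m hm
    interval_cases m
    simp
  | succ n ih =>
    intro m hm
    match m with
    | 0 =>
      rw [if_neg (by omega)]
      have := Int.alternating_sum_range_choose_of_ne (Nat.succ_ne_zero n)
      simpa using this
    | m+1 =>
      have step1 : ∑ a ∈ range (n+2), (-1:ℤ)^a * (n+1).choose a * (a:ℤ)^(m+1)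
          = ∑ b ∈ range (n+1), (-1:ℤ)^(b+1) * (n+1).choose (b+1) * ((b:ℤ)+1)^(m+1) := by
        rw [Finset.sum_range_succ']
        simp
      have step2 : ∀ b : ℕ, (-1:ℤ)^(b+1) * (n+1).choose (b+1) * ((b:ℤ)+1)^(m+1)
          = -((n:ℤ)+1) * ((-1:ℤ)^b * n.choose b * ((b:ℤ)+1)^m) := by
        intro b
        have h := Nat.add_one_mul_choose_eq n b
        have h' : ((n:ℤ)+1) * n.choose b = (n+1).choose (b+1) * ((b:ℤ)+1) := by
          exact_mod_cast congrArg (Nat.cast : ℕ → ℤ) h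
        linear_combination ((-1:ℤ)^b * ((b:ℤ)+1)^m) * h'
      have expand : ∀ b : ℕ, (-1:ℤ)^b * n.choose b * ((b:ℤ)+1)^m
          = ∑ j ∈ range (m+1), (m.choose j : ℤ) * ((-1:ℤ)^b * n.choose b * (b:ℤ)^j) := by
        intro b
        rw [add_pow, Finset.mul_sum]
        exact Finset.sum_congr rfl (fun j _ => by ring)
      have swap : ∑ b ∈ range (n+1), (-1:ℤ)^b * n.choose b * ((b:ℤ)+1)^m
          = ∑ j ∈ range (m+1), (m.choose j : ℤ) *
              (∑ b ∈ range (n+1), (-1:ℤ)^b * n.choose b * (b:ℤ)^j) := by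
        rw [Finset.sum_congr rfl (fun b _ => expand b), Finset.sum_comm]
        exact Finset.sum_congr rfl (fun j _ => (Finset.mul_sum _ _ _).symm)
      rw [step1, Finset.sum_congr rfl (fun b _ => step2 b), ← Finset.mul_sum, swap]
      have ihs : ∀ j ∈ range (m+1), (m.choose j : ℤ) *
            (∑ b ∈ range (n+1), (-1:ℤ)^b * n.choose b * (b:ℤ)^j)
          = (m.choose j : ℤ) * (if j = n then (-1:ℤ)^n * (n.factorial:ℤ) else 0) := by
        intro j hj
        rw [ih j (by simp at hj; omega)]
      rw [Finset.sum_congr rfl ihs]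
      by_cases hmn : m = n
      · subst hmn
        rw [Finset.sum_eq_single m
            (fun j _ hj => by rw [if_neg hj, mul_zero])
            (fun h => absurd (Finset.self_mem_range_succ m) h)]
        rw [if_pos rfl, if_pos rfl]
        simp [Nat.factorial_succ]
        push_cast
        ring
      · have hz : ∀ j ∈ range (m+1), (m.choose j : ℤ) *
            (if j = n then (-1:ℤ)^n * (n.factorial:ℤ) else 0) = 0 := by
          intro j hj
          simp only [Finset.mem_range] at hj
          rw [if_neg (by omega), mul_zero]
        rw [Finset.sum_congr rfl hz, Finset.sum_const_zero, if_neg (by omega), mul_zero]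

/-- `Aseq a = a! * H_a` as an integer. -/
def Aseq : ℕ → ℤ
  | 0 => 0
  | a+1 => (a+1) * Aseq a + a.factorial

lemma Aseq_eq (a : ℕ) : (Aseq a : ℚ) = (a.factorial : ℚ) * harmonicNum a := by
  induction a with
  | zero => simp [Aseq, harmonicNum]
  | succ a ih =>
    have h1 : harmonicNum (a+1) = harmonicNum a + 1/((a:ℚ)+1) := by
      rw [harmonicNum, harmonicNum, Finset.sum_Icc_succ_top (by omega)]
      push_cast; ring
    have hfac : ((a+1).factorial : ℚ) = ((a:ℚ)+1) * (a.factorial : ℚ) := by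
      rw [Nat.factorial_succ]; push_cast; ring
    have hne : ((a:ℚ)+1) ≠ 0 := by positivity
    show ((((a:ℤ)+1) * Aseq a + a.factorial : ℤ) : ℚ) = _
    push_cast
    rw [ih, h1, hfac]
    field_simp

/-- Key congruence: the descending factorial `(p-1)(p-2)⋯(p-a)` is
`(-1)^a (a! - p A_a)` mod `p²`. -/
lemma key_desc (p : ℕ) : ∀ a : ℕ, a ≤ p - 1 →
    ((p:ℤ))^2 ∣ ((p-1).descFactorial a : ℤ) - (-1:ℤ)^a * ((a.factorial : ℤ) - p * Aseq a) := by
  intro a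
  induction a with
  | zero => intro _; simp [Aseq]
  | succ a ih =>
    intro ha
    obtain ⟨k, hk⟩ := ih (by omega)
    have hcast : (((p-1) - a : ℕ) : ℤ) = (p:ℤ) - 1 - a := by
      have h1 : 1 ≤ p := by omega
      have h2 : a ≤ p - 1 := by omega
      push_cast [Nat.cast_sub h2, Nat.cast_sub h1]
      ring
    have hdesc : (((p-1).descFactorial (a+1) : ℕ) : ℤ)
        = ((p:ℤ) - 1 - a) * ((p-1).descFactorial a : ℤ) := by
      rw [Nat.descFactorial_succ, Nat.cast_mul, hcast]
    refine ⟨k * ((p:ℤ) - 1 - a) + (-1:ℤ)^(a+1) * Aseq a, ?_⟩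
    have hD : ((p-1).descFactorial a : ℤ)
        = (-1:ℤ)^a * ((a.factorial : ℤ) - p * Aseq a) + (p:ℤ)^2 * k := by linarith
    rw [hdesc, hD]
    show _ - (-1:ℤ)^(a+1) * (((a+1).factorial : ℤ) - p * ((a+1) * Aseq a + a.factorial)) = _
    have hfs : (((a+1).factorial : ℕ) : ℤ) = ((a:ℤ)+1) * (a.factorial : ℤ) := by
      rw [Nat.factorial_succ]; push_cast; ring
    rw [hfs]
    push_cast
    ring

/-- sums of rationals of the form `r * (c/d)` with `p ∤ d` keep that form. -/
lemma Qsum (p : ℕ) (hp : p.Prime) {α : Type*} (r : ℚ) (s : Finset α) (f : α → ℚ)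
    (h : ∀ a ∈ s, ∃ c d : ℤ, ¬ (p:ℤ) ∣ d ∧ f a = r * ((c:ℚ) / (d:ℚ))) :
    ∃ c d : ℤ, ¬ (p:ℤ) ∣ d ∧ ∑ a ∈ s, f a = r * ((c:ℚ) / (d:ℚ)) := by
  classical
  induction s using Finset.cons_induction with
  | empty =>
    refine ⟨0, 1, ?_, by simp⟩
    intro hd
    have h1 := Int.eq_one_of_dvd_one (by positivity) hd
    have h2 : (1:ℤ) < p := by exact_mod_cast hp.one_lt
    omega
  | cons a s ha ih =>
    obtain ⟨c1, d1, hd1, hf1⟩ := h a (Finset.mem_cons_self a s)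
    obtain ⟨c2, d2, hd2, hf2⟩ := ih (fun x hx => h x (Finset.mem_cons_of_mem hx))
    refine ⟨c1 * d2 + c2 * d1, d1 * d2, ?_, ?_⟩
    · intro hdvd
      have hprime : Prime (p:ℤ) := Nat.prime_iff_prime_int.mp hp
      rcases hprime.dvd_mul.mp hdvd with hh | hh
      exacts [hd1 hh, hd2 hh]
    · have h1 : (d1:ℚ) ≠ 0 := Int.cast_ne_zero.mpr (fun h => hd1 (by simp [h]))
      have h2 : (d2:ℚ) ≠ 0 := Int.cast_ne_zero.mpr (fun h => hd2 (by simp [h]))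
      rw [Finset.sum_cons, hf1, hf2]
      field_simp
      push_cast
      ring

section exactness
variable {p : ℕ} (hp : p.Prime)

lemma fermat_exact (hp : p.Prime) {a : ℕ} (ha : a ∈ Icc 1 (p-1)) :
    (p:ℤ) * fermatQuotient p a = (a:ℤ)^(p-1) - 1 := by
  haveI : Fact p.Prime := ⟨hp⟩
  simp only [Finset.mem_Icc] at ha
  have ha0 : (a : ZMod p) ≠ 0 := by
    rw [Ne, ZMod.natCast_eq_zero_iff]
    intro hdvd
    have := Nat.le_of_dvd (by omega) hdvd
    omega
  have hdvd : (p:ℤ) ∣ (a:ℤ)^(p-1) - 1 := by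
    rw [← ZMod.intCast_zmod_eq_zero_iff_dvd]
    push_cast
    rw [ZMod.pow_card_sub_one_eq_one ha0]
    ring
  exact Int.mul_ediv_cancel' hdvd

lemma wilson_exact (hp : p.Prime) :
    (p:ℤ) * wilsonQuotient p = ((p-1).factorial : ℤ) + 1 := by
  haveI : Fact p.Prime := ⟨hp⟩
  have hdvd : (p:ℤ) ∣ ((p-1).factorial : ℤ) + 1 := by
    rw [← ZMod.intCast_zmod_eq_zero_iff_dvd]
    push_cast
    rw [ZMod.wilsons_lemma]
    ring
  exact Int.mul_ediv_cancel' hdvd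

end exactness

theorem stmt_14 (p : ℕ) (hp : p.Prime) (hodd : Odd p) :
    ratCongr p 2 ((wilsonQuotient p : ℚ))
      ((∑ a ∈ Icc 1 (p - 1), ((fermatQuotient p a : ℚ)))
        - (p : ℚ) * ∑ a ∈ Icc 1 (p - 1), harmonicNum a * (fermatQuotient p a : ℚ)) := by
  have hp2 : 2 ≤ p := hp.two_le
  set n := p - 1 with hn
  have hn0 : n ≠ 0 := by omega
  have hneven : Even n := by
    obtain ⟨k, hk⟩ := hodd
    exact ⟨k, by omega⟩
  have hpne : (p:ℤ) ≠ 0 := by exact_mod_cast hp.pos.ne'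
  -- Step 1: exact identity W = ∑ (-1)^a C(n,a) q_a
  have hIcc : Icc 1 n = Ico 1 (n+1) := (Finset.Ico_add_one_right_eq_Icc 1 n).symm
  have split_sum : ∀ f : ℕ → ℤ, ∑ a ∈ range (n+1), f a = f 0 + ∑ a ∈ Icc 1 n, f a := by
    intro f
    rw [hIcc, Finset.range_eq_Ico, Finset.sum_eq_sum_Ico_succ_bot (by omega) f]
  have hA : ∑ a ∈ Icc 1 n, (-1:ℤ)^a * (n.choose a) * (a:ℤ)^n = (n.factorial : ℤ) := by
    have h1 := altsum n n le_rfl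
    rw [if_pos rfl, hneven.neg_one_pow, one_mul] at h1
    have h2 := split_sum (fun a => (-1:ℤ)^a * (n.choose a) * (a:ℤ)^n)
    rw [h1] at h2
    norm_num [zero_pow hn0] at h2
    omega
  have hB : ∑ a ∈ Icc 1 n, (-1:ℤ)^a * (n.choose a) = -1 := by
    have h1 := Int.alternating_sum_range_choose_of_ne hn0
    have h2 := split_sum (fun a => (-1:ℤ)^a * (n.choose a))
    rw [h1] at h2
    simp only [pow_zero, Nat.choose_zero_right, Nat.cast_one, mul_one, one_mul] at h2
    omega
  have hWS : wilsonQuotient p = ∑ a ∈ Icc 1 n, (-1:ℤ)^a * (n.choose a) * fermatQuotient p a := by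
    apply mul_left_cancel₀ hpne
    rw [wilson_exact hp, Finset.mul_sum]
    have : ∀ a ∈ Icc 1 n, (p:ℤ) * ((-1:ℤ)^a * (n.choose a) * fermatQuotient p a)
        = (-1:ℤ)^a * (n.choose a) * (a:ℤ)^n - (-1:ℤ)^a * (n.choose a) := by
      intro a ha
      have hq := fermat_exact hp (p := p) (a := a) ha
      linear_combination ((-1:ℤ)^a * (n.choose a : ℤ)) * hq
    rw [Finset.sum_congr rfl this, Finset.sum_sub_distrib, hA, hB]
    ring
  -- Step 2: per-term p² divisibility
  have key : ∀ a ∈ Icc 1 n, ∃ c d : ℤ, ¬ (p:ℤ) ∣ d ∧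
      ((-1:ℚ)^a * ((n.choose a : ℕ) : ℚ) - 1 + (p:ℚ) * harmonicNum a) * ((fermatQuotient p a : ℤ) : ℚ)
        = (p:ℚ)^2 * ((c:ℚ)/(d:ℚ)) := by
    intro a ha
    simp only [Finset.mem_Icc] at ha
    obtain ⟨m, hm⟩ := key_desc p a (by omega)
    rw [Nat.descFactorial_eq_factorial_mul_choose] at hm
    refine ⟨(-1:ℤ)^a * m * fermatQuotient p a, (a.factorial : ℤ), ?_, ?_⟩
    · rw [Int.natCast_dvd_natCast]
      intro hdvd
      have := (Nat.Prime.dvd_factorial hp).mp hdvd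
      omega
    · have hfne : ((a.factorial : ℕ) : ℚ) ≠ 0 := by
        exact_mod_cast (Nat.factorial_pos a).ne'
      have hmQ : ((a.factorial : ℚ) * ((n.choose a : ℕ) : ℚ))
          - (-1:ℚ)^a * ((a.factorial : ℚ) - (p:ℚ) * (Aseq a : ℚ)) = (p:ℚ)^2 * (m:ℚ) := by
        have : (((a.factorial * n.choose a : ℕ) : ℤ) : ℚ)
            - ((-1:ℤ)^a * ((a.factorial : ℤ) - p * Aseq a) : ℤ) = (((p:ℤ)^2 * m : ℤ) : ℚ) := by
          rw [← Int.cast_sub, hm]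
        push_cast at this
        push_cast
        linarith
      have hsq : (-1:ℚ)^a * (-1:ℚ)^a = 1 := by
        rw [← pow_add]
        exact Even.neg_one_pow ⟨a, rfl⟩
      have hAe := Aseq_eq a
      push_cast
      rw [← mul_div_assoc, eq_div_iff hfne]
      linear_combination ((-1:ℚ)^a * ((fermatQuotient p a : ℤ) : ℚ)) * hmQ
        + (((fermatQuotient p a : ℤ) : ℚ) * ((a.factorial : ℚ) - (p:ℚ) * ((Aseq a : ℤ):ℚ))) * hsq
        + (-(p:ℚ) * ((fermatQuotient p a : ℤ) : ℚ)) * hAe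
  -- Step 3: assemble
  obtain ⟨c, d, hd, hsum⟩ := Qsum p hp ((p:ℚ)^2) (Icc 1 n)
    (fun a => ((-1:ℚ)^a * ((n.choose a : ℕ) : ℚ) - 1 + (p:ℚ) * harmonicNum a)
      * ((fermatQuotient p a : ℤ) : ℚ)) key
  refine ⟨c, d, hd, ?_⟩
  rw [← hsum]
  have hWQ : ((wilsonQuotient p : ℤ) : ℚ)
      = ∑ a ∈ Icc 1 n, (-1:ℚ)^a * ((n.choose a : ℕ) : ℚ) * ((fermatQuotient p a : ℤ) : ℚ) := by
    have := congrArg (fun z : ℤ => (z : ℚ)) hWS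
    push_cast at this
    exact this
  have habc : ∀ (x y z : ℚ), x - (y - z) = (x - y) + z := by intros; ring
  rw [hWQ, habc, Finset.mul_sum, ← Finset.sum_sub_distrib, ← Finset.sum_add_distrib]
  exact Finset.sum_congr rfl (fun a _ => by ring)
end

section
/- Let p be a prime with p > 3. Then p is a Lerch prime if and only if ∑_{a=1}^{p−1} H_a·q_p(a) ≡ 0 (mod p) as rational numbers, i.e. the rational number ∑_{a=1}^{p−1} H_a·q_p(a) equals p·(a/b) for some integers a, b with p ∤ b. -/
open Finset

def PI (p : ℕ) (x : ℚ) : Prop := ∃ c d : ℤ, ¬ (p : ℤ) ∣ d ∧ x * d = c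

def PP (p k : ℕ) (x : ℚ) : Prop := ∃ c d : ℤ, ¬ (p : ℤ) ∣ d ∧ x * d = (p : ℚ) ^ k * c

section infra

variable {p k : ℕ} {x y : ℚ}

lemma d_ne {d : ℤ} (h : ¬ (p : ℤ) ∣ d) : (d : ℚ) ≠ 0 := fun h0 => h (by
  have : d = 0 := by exact_mod_cast h0
  simp [this])

lemma intPrime (hp : p.Prime) : Prime ((p : ℤ)) := Nat.prime_iff_prime_int.mp hp

lemma one_ndvd (hp : p.Prime) : ¬ (p : ℤ) ∣ 1 := fun h => by
  have h1 : ((p:ℤ)) ≤ 1 := Int.le_of_dvd one_pos h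
  have h2 := hp.two_le
  omega

lemma ndvd_mul (hp : p.Prime) {d1 d2 : ℤ} (h1 : ¬ (p:ℤ) ∣ d1) (h2 : ¬ (p:ℤ) ∣ d2) :
    ¬ (p:ℤ) ∣ d1 * d2 :=
  fun h => ((intPrime hp).dvd_mul.mp h).elim h1 h2

lemma PI.intCast (hp : p.Prime) (n : ℤ) : PI p (n : ℚ) := ⟨n, 1, one_ndvd hp, by simp⟩

lemma PI.natCast (hp : p.Prime) (n : ℕ) : PI p (n : ℚ) := by exact_mod_cast PI.intCast hp (n : ℤ)

lemma PI.one (hp : p.Prime) : PI p 1 := by exact_mod_cast PI.natCast hp 1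

lemma PI.add (hp : p.Prime) (hx : PI p x) (hy : PI p y) : PI p (x + y) := by
  obtain ⟨c1, d1, h1, e1⟩ := hx
  obtain ⟨c2, d2, h2, e2⟩ := hy
  refine ⟨c1 * d2 + c2 * d1, d1 * d2, ndvd_mul hp h1 h2, ?_⟩
  push_cast
  linear_combination (d2:ℚ) * e1 + (d1:ℚ) * e2

lemma PI.mul (hp : p.Prime) (hx : PI p x) (hy : PI p y) : PI p (x * y) := by
  obtain ⟨c1, d1, h1, e1⟩ := hx
  obtain ⟨c2, d2, h2, e2⟩ := hy
  refine ⟨c1 * c2, d1 * d2, ndvd_mul hp h1 h2, ?_⟩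
  push_cast
  linear_combination (y * (d2:ℚ)) * e1 + (c1:ℚ) * e2

lemma PI.neg (hx : PI p x) : PI p (-x) := by
  obtain ⟨c1, d1, h1, e1⟩ := hx
  exact ⟨-c1, d1, h1, by push_cast; linear_combination -e1⟩

lemma PI.sub (hp : p.Prime) (hx : PI p x) (hy : PI p y) : PI p (x - y) := by
  simpa [sub_eq_add_neg] using PI.add hp hx (PI.neg hy)

lemma PI.sum (hp : p.Prime) {α : Type*} {s : Finset α} {f : α → ℚ} (h : ∀ i ∈ s, PI p (f i)) :
    PI p (∑ i ∈ s, f i) := by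
  classical
  induction s using Finset.induction_on with
  | empty => simpa using PI.natCast hp 0
  | insert a s hni ih =>
    rw [Finset.sum_insert hni]
    exact PI.add hp (h a (Finset.mem_insert_self a s))
      (ih fun i hi => h i (Finset.mem_insert_of_mem hi))

lemma PI.inv_nat (hp : p.Prime) {m : ℕ} (h0 : 0 < m) (hlt : m < p) : PI p (1 / (m : ℚ)) := by
  refine ⟨1, m, ?_, ?_⟩
  · intro h
    have : p ∣ m := by exact_mod_cast h
    exact absurd (Nat.le_of_dvd h0 this) (not_le.mpr hlt)
  · have : (m : ℚ) ≠ 0 := by positivity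
    field_simp
    push_cast; ring

lemma PI.of_eq {x y : ℚ} (hx : PI p x) (h : x = y) : PI p y := h ▸ hx

lemma PI.pow (hp : p.Prime) (hx : PI p x) (m : ℕ) : PI p (x ^ m) := by
  induction m with
  | zero => simpa using PI.one hp
  | succ m ih => rw [pow_succ]; exact PI.mul hp ih hx

end infra

section pp

variable {p k j : ℕ} {x y : ℚ}

lemma PP.zero (hp : p.Prime) : PP p k 0 := ⟨0, 1, one_ndvd hp, by simp⟩

lemma PP.of_eq (hx : PP p k x) (h : x = y) : PP p k y := h ▸ hx

lemma PP.add (hp : p.Prime) (hx : PP p k x) (hy : PP p k y) : PP p k (x + y) := by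
  obtain ⟨c1, d1, h1, e1⟩ := hx
  obtain ⟨c2, d2, h2, e2⟩ := hy
  refine ⟨c1 * d2 + c2 * d1, d1 * d2, ndvd_mul hp h1 h2, ?_⟩
  push_cast
  linear_combination (d2:ℚ) * e1 + (d1:ℚ) * e2

lemma PP.neg (hx : PP p k x) : PP p k (-x) := by
  obtain ⟨c1, d1, h1, e1⟩ := hx
  exact ⟨-c1, d1, h1, by push_cast; linear_combination -e1⟩

lemma PP.sub (hp : p.Prime) (hx : PP p k x) (hy : PP p k y) : PP p k (x - y) := by
  simpa [sub_eq_add_neg] using PP.add hp hx (PP.neg hy)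

lemma PP.mul_pi (hp : p.Prime) (hx : PP p k x) (hy : PI p y) : PP p k (x * y) := by
  obtain ⟨c1, d1, h1, e1⟩ := hx
  obtain ⟨c2, d2, h2, e2⟩ := hy
  refine ⟨c1 * c2, d1 * d2, ndvd_mul hp h1 h2, ?_⟩
  push_cast
  linear_combination (y * (d2:ℚ)) * e1 + ((p:ℚ)^k * (c1:ℚ)) * e2

lemma PP.sum (hp : p.Prime) {α : Type*} {s : Finset α} {f : α → ℚ}
    (h : ∀ i ∈ s, PP p k (f i)) : PP p k (∑ i ∈ s, f i) := by
  classical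
  induction s using Finset.induction_on with
  | empty => simpa using PP.zero hp
  | insert a s hni ih =>
    rw [Finset.sum_insert hni]
    exact PP.add hp (h a (Finset.mem_insert_self a s))
      (ih fun i hi => h i (Finset.mem_insert_of_mem hi))

lemma PP.pi (hx : PP p k x) : PI p x := by
  obtain ⟨c1, d1, h1, e1⟩ := hx
  exact ⟨p ^ k * c1, d1, h1, by push_cast; linear_combination e1⟩

lemma PP.mono (h : j ≤ k) (hx : PP p k x) : PP p j x := by
  obtain ⟨c1, d1, h1, e1⟩ := hx
  refine ⟨p ^ (k - j) * c1, d1, h1, ?_⟩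
  rw [e1]
  push_cast
  rw [← mul_assoc, ← pow_add, Nat.add_sub_cancel' h]

lemma PP.pk_mul_pi (hp : p.Prime) (hy : PI p y) : PP p k ((p:ℚ) ^ k * y) := by
  obtain ⟨c2, d2, h2, e2⟩ := hy
  exact ⟨c2, d2, h2, by linear_combination (p:ℚ)^k * e2⟩

lemma PP.p_mul (hx : PP p k x) : PP p (k + 1) ((p:ℚ) * x) := by
  obtain ⟨c1, d1, h1, e1⟩ := hx
  exact ⟨c1, d1, h1, by push_cast; ring_nf; linear_combination (p:ℚ) * e1⟩

lemma PP.p_cancel (hp : p.Prime) (hx : PP p (k + 1) ((p:ℚ) * x)) : PP p k x := by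
  obtain ⟨c1, d1, h1, e1⟩ := hx
  refine ⟨c1, d1, h1, ?_⟩
  have hpne : (p : ℚ) ≠ 0 := by exact_mod_cast hp.ne_zero
  have : (p:ℚ) * (x * d1) = (p:ℚ) * ((p:ℚ) ^ k * c1) := by
    push_cast at e1 ⊢
    linear_combination e1
  exact mul_left_cancel₀ hpne this

lemma PP.pi_zero (hp : p.Prime) (hx : PI p x) : PP p 0 x := by
  obtain ⟨c, d, h, e⟩ := hx
  exact ⟨c, d, h, by simpa using e⟩

/-- key bridge to integers -/
lemma PP.int_iff (hp : p.Prime) {n : ℤ} : PP p k (n : ℚ) ↔ (p:ℤ) ^ k ∣ n := by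
  constructor
  · rintro ⟨c, d, h, e⟩
    have e' : n * d = (p:ℤ) ^ k * c := by exact_mod_cast e
    have hcop : IsCoprime ((p:ℤ) ^ k) d :=
      IsCoprime.pow_left (((intPrime hp).coprime_iff_not_dvd).mpr h)
    exact hcop.dvd_of_dvd_mul_right ⟨c, by linarith [e']⟩
  · rintro ⟨c, rfl⟩
    exact ⟨c, 1, one_ndvd hp, by push_cast; ring⟩

end pp

section harmonic

variable {p : ℕ}

lemma harmonicNum_zero : harmonicNum 0 = 0 := by simp [harmonicNum]
lemma harmonicNum2_zero : harmonicNum2 0 = 0 := by simp [harmonicNum2]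

lemma harmonicNum_succ (a : ℕ) : harmonicNum (a + 1) = harmonicNum a + 1 / (a + 1) := by
  rw [harmonicNum, Finset.sum_Icc_succ_top (by omega : 1 ≤ a + 1)]
  push_cast
  rfl

lemma harmonicNum2_succ (a : ℕ) :
    harmonicNum2 (a + 1) = harmonicNum2 a + 1 / ((a : ℚ) + 1) ^ 2 := by
  rw [harmonicNum2, Finset.sum_Icc_succ_top (by omega : 1 ≤ a + 1)]
  push_cast
  rfl

lemma PI.harmonic (hp : p.Prime) {a : ℕ} (ha : a < p) : PI p (harmonicNum a) := by
  refine PI.sum hp fun k hk => ?_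
  simp only [Finset.mem_Icc] at hk
  exact PI.inv_nat hp (by omega) (by omega)

lemma PI.harmonic2 (hp : p.Prime) {a : ℕ} (ha : a < p) : PI p (harmonicNum2 a) := by
  refine PI.sum hp fun k hk => ?_
  simp only [Finset.mem_Icc] at hk
  have h1 : PI p (1 / (k:ℚ)) := PI.inv_nat hp (by omega) (by omega)
  have := PI.mul hp h1 h1
  refine this.of_eq ?_
  have : (k:ℚ) ≠ 0 := by
    have : 0 < k := by omega
    positivity
  field_simp

/-- sum of harmonic numbers -/
lemma sum_harmonic (n : ℕ) :
    ∑ a ∈ Icc 1 n, harmonicNum a = (n + 1) * harmonicNum n - n := by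
  induction n with
  | zero => simp [harmonicNum_zero]
  | succ n ih =>
    rw [Finset.sum_Icc_succ_top (by omega : 1 ≤ n + 1), ih, harmonicNum_succ]
    have h : ((n:ℚ) + 1) ≠ 0 := by positivity
    field_simp
    push_cast
    ring

lemma sum_harmonic2 (n : ℕ) :
    ∑ a ∈ Icc 1 n, harmonicNum2 a = (n + 1) * harmonicNum2 n - harmonicNum n := by
  induction n with
  | zero => simp [harmonicNum_zero, harmonicNum2_zero]
  | succ n ih =>
    rw [Finset.sum_Icc_succ_top (by omega : 1 ≤ n + 1), ih, harmonicNum2_succ,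
      harmonicNum_succ]
    have h : ((n:ℚ) + 1) ≠ 0 := by positivity
    field_simp
    push_cast
    ring

lemma sum_harmonic_sq (n : ℕ) :
    ∑ a ∈ Icc 1 n, (harmonicNum a) ^ 2
      = (n + 1) * (harmonicNum n) ^ 2 - (2 * n + 1) * harmonicNum n + 2 * n := by
  induction n with
  | zero => simp [harmonicNum_zero]
  | succ n ih =>
    rw [Finset.sum_Icc_succ_top (by omega : 1 ≤ n + 1), ih, harmonicNum_succ]
    have h : ((n:ℚ) + 1) ≠ 0 := by positivity
    field_simp
    push_cast
    ring

end harmonic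

section binom

variable {p : ℕ}

lemma binom_cong (hp : p.Prime) (hp3 : 3 < p) :
    ∀ {a : ℕ}, a ≤ p - 1 →
    PP p 3 ((-1:ℚ) ^ a * ((p-1).choose a : ℚ)
      - (1 - p * harmonicNum a
         + p ^ 2 * ((harmonicNum a ^ 2 - harmonicNum2 a) / 2))) := by
  intro a
  induction a with
  | zero =>
    intro _
    refine (PP.zero hp).of_eq ?_
    simp [harmonicNum_zero, harmonicNum2_zero]
  | succ a ih =>
    intro ha
    have ha' : a ≤ p - 1 := by omega
    have hap : a + 1 < p := by omega
    have hXa := ih ha'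
    set H : ℚ := harmonicNum a with hH
    set H2 : ℚ := harmonicNum2 a with hH2
    have hchoose : ((p-1).choose (a+1) : ℚ) * (a+1) = ((p-1).choose a : ℚ) * ((p:ℚ) - 1 - a) := by
      have := Nat.choose_succ_right_eq (p-1) a
      have hcast : (((p-1) - a : ℕ) : ℚ) = (p:ℚ) - 1 - a := by
        have h1 : a ≤ p - 1 := ha'
        push_cast [Nat.cast_sub h1, Nat.cast_sub (by omega : 1 ≤ p)]
        ring
      calc ((p-1).choose (a+1) : ℚ) * (a+1)
          = (((p-1).choose (a+1) * (a+1) : ℕ) : ℚ) := by push_cast; ring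
        _ = (((p-1).choose a * ((p-1) - a) : ℕ) : ℚ) := by rw [this]
        _ = ((p-1).choose a : ℚ) * ((p:ℚ) - 1 - a) := by push_cast [hcast]; ring
    have ht : ((a:ℚ) + 1) ≠ 0 := by positivity
    -- the exact algebraic step
    have key : (-1:ℚ) ^ (a+1) * ((p-1).choose (a+1) : ℚ)
        - (1 - p * harmonicNum (a+1)
           + p ^ 2 * ((harmonicNum (a+1) ^ 2 - harmonicNum2 (a+1)) / 2))
        = ((-1:ℚ) ^ a * ((p-1).choose a : ℚ)
            - (1 - p * H + p ^ 2 * ((H ^ 2 - H2) / 2))) * (1 - p * (1/((a:ℚ)+1)))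
          - p ^ 3 * ((1/((a:ℚ)+1)) * ((H ^ 2 - H2) / 2)) := by
      rw [harmonicNum_succ, harmonicNum2_succ, ← hH, ← hH2]
      have hc : ((p-1).choose (a+1) : ℚ) = ((p-1).choose a : ℚ) * ((p:ℚ) - 1 - a) / (a+1) := by
        field_simp at hchoose ⊢
        linarith [hchoose]
      rw [hc, pow_succ]
      field_simp
      ring
    refine PP.of_eq ?_ key.symm
    have hpi1 : PI p (1 - p * (1/((a:ℚ)+1))) :=
      PI.sub hp (PI.one hp) (PI.mul hp (PI.natCast hp p) ((PI.inv_nat hp (by omega) hap).of_eq (by push_cast; ring)))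
    have hpi2 : PI p ((1/((a:ℚ)+1)) * ((H ^ 2 - H2) / 2)) := by
      have hH' : PI p H := PI.harmonic hp (by omega)
      have hH2' : PI p H2 := PI.harmonic2 hp (by omega)
      have h2 : PI p (1 / (2:ℚ)) := by
        have := PI.inv_nat hp (by norm_num : 0 < 2) (by omega)
        simpa using this
      have : PI p ((H ^ 2 - H2) * (1/2)) :=
        PI.mul hp (PI.sub hp (PI.pow hp hH' 2) hH2') h2
      exact PI.mul hp ((PI.inv_nat hp (by omega) hap).of_eq (by push_cast; ring)) (this.of_eq (by ring))
    exact PP.sub hp (PP.mul_pi hp hXa hpi1) (PP.pk_mul_pi hp hpi2)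

end binom

section fd
open Polynomial fwdDiff

lemma fwdDiff_eval (P : ℚ[X]) :
    Δ_[(1:ℕ)] (fun x : ℕ => P.eval (x:ℚ)) = fun x : ℕ => (taylor 1 P - P).eval (x:ℚ) := by
  funext x
  simp only [fwdDiff, eval_sub, taylor_eval]
  push_cast
  ring_nf

lemma fwdDiff_iter_poly : ∀ (n : ℕ) (P : ℚ[X]), P.natDegree ≤ n →
    (Δ_[1])^[n] (fun x : ℕ => P.eval (x:ℚ)) = fun _ => P.coeff n * n.factorial := by
  intro n
  induction n with
  | zero =>
    intro P hP
    funext x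
    have hP' : P = C (P.coeff 0) := Polynomial.eq_C_of_natDegree_le_zero hP
    rw [Function.iterate_zero_apply]
    rw [hP']
    simp
  | succ n ih =>
    intro P hP
    set Q : ℚ[X] := taylor 1 P - P with hQ
    have hQn : Q.coeff n = (n+1) * P.coeff (n+1) := by
      have hR : (hasseDeriv n P).natDegree < 2 := by
        have := Polynomial.natDegree_hasseDeriv_le P n
        omega
      have heval : (hasseDeriv n P).eval 1
          = (hasseDeriv n P).coeff 0 + (hasseDeriv n P).coeff 1 := by
        rw [Polynomial.eval_eq_sum_range' hR]
        simp [Finset.sum_range_succ]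
      have hc0 : (hasseDeriv n P).coeff 0 = P.coeff n := by
        rw [Polynomial.hasseDeriv_coeff]
        simp
      have hc1 : (hasseDeriv n P).coeff 1 = (n+1) * P.coeff (n+1) := by
        rw [Polynomial.hasseDeriv_coeff]
        rw [Nat.add_comm 1 n, Nat.choose_succ_self_right]
        push_cast
        ring_nf
      rw [hQ, Polynomial.coeff_sub, Polynomial.taylor_coeff, heval, hc0, hc1]
      ring
    have hQdeg : Q.natDegree ≤ n := by
      rw [Polynomial.natDegree_le_iff_coeff_eq_zero]
      intro m hm
      rcases Nat.lt_or_ge (n+1) m with h | h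
      · rw [hQ, Polynomial.coeff_sub,
          Polynomial.coeff_eq_zero_of_natDegree_lt (by rw [Polynomial.natDegree_taylor]; omega),
          Polynomial.coeff_eq_zero_of_natDegree_lt (by omega), sub_zero]
      · have hm1 : m = n + 1 := by omega
        subst hm1
        have hRd : (hasseDeriv (n+1) P).natDegree ≤ 0 := by
          have := Polynomial.natDegree_hasseDeriv_le P (n+1)
          omega
        have : (hasseDeriv (n+1) P).eval 1 = (hasseDeriv (n+1) P).coeff 0 := by
          rw [Polynomial.eq_C_of_natDegree_le_zero hRd]
          simp
        rw [hQ, Polynomial.coeff_sub, Polynomial.taylor_coeff, this,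
          Polynomial.hasseDeriv_coeff]
        simp
    rw [Function.iterate_succ_apply, fwdDiff_eval, ih Q hQdeg]
    funext x
    rw [hQn]
    have : P.coeff (n+1) * ((n+1).factorial : ℚ) = (n+1) * P.coeff (n+1) * n.factorial := by
      rw [Nat.factorial_succ]
      push_cast
      ring
    rw [this]

lemma alt_sum_pow (n : ℕ) :
    ∑ k ∈ range (n+1), ((-1:ℚ)^(n-k) * ((n.choose k) : ℚ)) * (k:ℚ)^n = n.factorial := by
  have h := fwdDiff_iter_eq_sum_shift (1 : ℕ) (fun x : ℕ => ((X:ℚ[X])^n).eval (x:ℚ)) n 0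
  rw [fwdDiff_iter_poly n ((X:ℚ[X])^n) (by simp)] at h
  simp only [Polynomial.coeff_X_pow, if_pos rfl, one_mul, Polynomial.eval_pow,
    Polynomial.eval_X, zero_add, smul_eq_mul, mul_one, zsmul_eq_mul] at h
  have h' : (n.factorial : ℚ)
      = ∑ x ∈ range (n + 1), ((((-1) ^ (n - x) * (n.choose x : ℤ)) : ℤ) : ℚ) * (x:ℚ) ^ n := by
    simpa using h
  rw [h']
  apply Finset.sum_congr rfl
  intro k _
  push_cast
  ring
end fd

section wolst

variable {p : ℕ}

lemma fermat_dvd (hp : p.Prime) {k : ℕ} (hk : ¬ p ∣ k) : (p:ℤ) ∣ (k:ℤ)^(p-1) - 1 := by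
  haveI : Fact p.Prime := ⟨hp⟩
  rw [← ZMod.intCast_zmod_eq_zero_iff_dvd]
  push_cast
  rw [ZMod.pow_card_sub_one_eq_one (by
    rw [Ne, ZMod.natCast_eq_zero_iff]
    exact hk)]
  ring

lemma fermat_pp (hp : p.Prime) {k : ℕ} (h1 : 1 ≤ k) (h2 : k < p) :
    PP p 1 (1/(k:ℚ) - (k:ℚ)^(p-2)) := by
  have hk : ¬ p ∣ k := fun h => by have := Nat.le_of_dvd (by omega) h; omega
  obtain ⟨c, hc⟩ := fermat_dvd hp hk
  refine ⟨-c, k, ?_, ?_⟩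
  · rw [Int.natCast_dvd_natCast]; exact hk
  · have hk0 : (k:ℚ) ≠ 0 := by positivity
    have hcast : ((k:ℤ)^(p-1) - 1 : ℤ) = ((p:ℤ)) * c := hc
    have hcq : (k:ℚ)^(p-1) - 1 = (p:ℚ) * c := by exact_mod_cast hcast
    have hpow : (k:ℚ)^(p-1) = (k:ℚ)^(p-2) * k := by
      rw [← pow_succ]
      congr 1
      omega
    push_cast
    field_simp
    linear_combination -hcq + hpow

lemma sum_pow_int_dvd (hp : p.Prime) (hp3 : 3 < p) :
    (p:ℤ) ∣ ∑ k ∈ Icc 1 (p-1), (k:ℤ)^(2*(p-2)) := by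
  haveI : Fact p.Prime := ⟨hp⟩
  rw [← ZMod.intCast_zmod_eq_zero_iff_dvd]
  push_cast
  have hstep : ∀ k ∈ Icc 1 (p-1), ((k : ZMod p))^(2*(p-2)) = ((k : ZMod p))^(p-3) := by
    intro k hk
    simp only [Finset.mem_Icc] at hk
    have hk0 : (k : ZMod p) ≠ 0 := by
      rw [Ne, ZMod.natCast_eq_zero_iff]
      intro h
      have := Nat.le_of_dvd (by omega) h
      omega
    have he : 2*(p-2) = (p-1) + (p-3) := by omega
    rw [he, pow_add, ZMod.pow_card_sub_one_eq_one hk0, one_mul]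
  rw [Finset.sum_congr rfl hstep]
  have hbij : ∑ k ∈ Icc 1 (p-1), ((k : ZMod p))^(p-3)
      = ∑ x ∈ (Finset.univ \ {0} : Finset (ZMod p)), x^(p-3) := by
    refine Finset.sum_nbij' (fun k => (k : ZMod p)) (fun x => x.val) ?_ ?_ ?_ ?_ ?_
    · intro k hk
      simp only [Finset.mem_Icc] at hk
      simp only [Finset.mem_sdiff, Finset.mem_univ, true_and, Finset.mem_singleton]
      rw [ZMod.natCast_eq_zero_iff]
      intro h
      have := Nat.le_of_dvd (by omega) h
      omega
    · intro x hx
      simp only [Finset.mem_sdiff, Finset.mem_univ, true_and, Finset.mem_singleton] at hx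
      simp only [Finset.mem_Icc]
      have h1 : x.val < p := ZMod.val_lt x
      have h2 : x.val ≠ 0 := fun h => hx (by
        have := ZMod.natCast_rightInverse (n := p) x
        rw [← this, h]
        simp)
      omega
    · intro k hk
      simp only [Finset.mem_Icc] at hk
      exact ZMod.val_cast_of_lt (by omega)
    · intro x _
      exact ZMod.natCast_rightInverse x
    · intro k _
      rfl
  rw [hbij]
  have h0 : (0 : ZMod p)^(p-3) = 0 := by
    rw [zero_pow]
    omega
  have hsplit : ∑ x ∈ (Finset.univ \ {0} : Finset (ZMod p)), x^(p-3)
      = (∑ x : ZMod p, x^(p-3)) - 0^(p-3) := by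
    rw [Finset.sum_sdiff_eq_sub (Finset.singleton_subset_iff.mpr (Finset.mem_univ 0))]
    simp
  rw [hsplit, h0, sub_zero]
  have hcard : p - 3 < Fintype.card (ZMod p) - 1 := by
    rw [ZMod.card]
    omega
  rw [FiniteField.sum_pow_lt_card_sub_one (ZMod p) (p-3) hcard]

lemma pp_harmonic2 (hp : p.Prime) (hp3 : 3 < p) : PP p 1 (harmonicNum2 (p-1)) := by
  have key : PP p 1 (harmonicNum2 (p-1) - ∑ k ∈ Icc 1 (p-1), (k:ℚ)^(2*(p-2))) := by
    rw [harmonicNum2, ← Finset.sum_sub_distrib]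
    refine PP.sum hp fun k hk => ?_
    simp only [Finset.mem_Icc] at hk
    have h1 : 1 ≤ k := hk.1
    have h2 : k < p := by omega
    have hk0 : (k:ℚ) ≠ 0 := by positivity
    have hmul := PP.mul_pi hp (fermat_pp hp h1 h2)
      (PI.add hp (PI.inv_nat hp (by omega) h2)
        (PI.pow hp (PI.natCast hp k) (p-2)))
    refine hmul.of_eq ?_
    have : (k:ℚ)^(p-2) * (k:ℚ)^(p-2) = (k:ℚ)^(2*(p-2)) := by
      rw [← pow_add]
      congr 1
      omega
    field_simp
    linear_combination (k:ℚ)^2 * this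
  have hint : PP p 1 ((∑ k ∈ Icc 1 (p-1), (k:ℤ)^(2*(p-2)) : ℤ) : ℚ) := by
    rw [PP.int_iff hp, pow_one]
    exact sum_pow_int_dvd hp hp3
  have := PP.add hp key (hint.of_eq (by push_cast; ring))
  exact this.of_eq (by ring)

lemma pp_wolstenholme (hp : p.Prime) (hp3 : 3 < p) : PP p 2 (harmonicNum (p-1)) := by
  -- reflection: H = ∑ 1/(p-k)
  have hrefl : harmonicNum (p-1) = ∑ k ∈ Icc 1 (p-1), 1/((p:ℚ) - k) := by
    rw [harmonicNum]
    refine Finset.sum_nbij' (fun k => p - k) (fun k => p - k) ?_ ?_ ?_ ?_ ?_ <;>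
      intro k hk <;> simp only [Finset.mem_Icc] at *
    · omega
    · omega
    · omega
    · omega
    · have h1 : 1 ≤ k := hk.1
      have h2 : k ≤ p - 1 := hk.2
      have hc : ((p - k : ℕ) : ℚ) = (p:ℚ) - k := by
        push_cast [Nat.cast_sub (by omega : k ≤ p)]
        ring
      rw [hc]
      ring_nf
  have h2H : 2 * harmonicNum (p-1)
      = (p:ℚ) * ∑ k ∈ Icc 1 (p-1), (1/(k:ℚ)) * (1/((p:ℚ) - k)) := by
    have : 2 * harmonicNum (p-1)
        = ∑ k ∈ Icc 1 (p-1), (1/(k:ℚ) + 1/((p:ℚ) - k)) := by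
      rw [Finset.sum_add_distrib, ← harmonicNum, ← hrefl]
      ring
    rw [this, Finset.mul_sum]
    refine Finset.sum_congr rfl fun k hk => ?_
    simp only [Finset.mem_Icc] at hk
    have hk0 : (k:ℚ) ≠ 0 := by
      have : 1 ≤ k := hk.1
      positivity
    have hpk : (p:ℚ) - k ≠ 0 := by
      have : k < p := by omega
      have : (k:ℚ) < p := by exact_mod_cast this
      intro h
      nlinarith
    field_simp
    ring
  have hsum : PP p 1 (∑ k ∈ Icc 1 (p-1), (1/(k:ℚ)) * (1/((p:ℚ) - k))) := by
    have hterm : ∀ k ∈ Icc 1 (p-1), (1/(k:ℚ)) * (1/((p:ℚ) - k))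
        = (p:ℚ) * ((1/(k:ℚ))^2 * (1/((p:ℚ) - k))) - (1/(k:ℚ))^2 := by
      intro k hk
      simp only [Finset.mem_Icc] at hk
      have hk0 : (k:ℚ) ≠ 0 := by
        have : 1 ≤ k := hk.1
        positivity
      have hpk : (p:ℚ) - k ≠ 0 := by
        have : k < p := by omega
        have : (k:ℚ) < p := by exact_mod_cast this
        intro h
        nlinarith
      field_simp
      ring
    rw [Finset.sum_congr rfl hterm, Finset.sum_sub_distrib, ← Finset.mul_sum]
    have hpi : PI p (∑ k ∈ Icc 1 (p-1), (1/(k:ℚ))^2 * (1/((p:ℚ) - k))) := by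
      refine PI.sum hp fun k hk => ?_
      simp only [Finset.mem_Icc] at hk
      have hinv1 : PI p (1/(k:ℚ)) := PI.inv_nat hp (by omega) (by omega)
      have hinv2 : PI p (1/((p:ℚ) - k)) := by
        have := PI.inv_nat hp (m := p - k) (by omega) (by omega)
        refine this.of_eq ?_
        have hc : ((p - k : ℕ) : ℚ) = (p:ℚ) - k := by
          push_cast [Nat.cast_sub (by omega : k ≤ p)]
          ring
        rw [hc]
      exact PI.mul hp (PI.pow hp hinv1 2) hinv2
    have h1 : PP p 1 ((p:ℚ) * ∑ k ∈ Icc 1 (p-1), (1/(k:ℚ))^2 * (1/((p:ℚ) - k))) := by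
      have := PP.pk_mul_pi (k := 1) hp hpi
      exact this.of_eq (by rw [pow_one])
    have h2 : PP p 1 (∑ k ∈ Icc 1 (p-1), (1/(k:ℚ))^2) := by
      have := pp_harmonic2 hp hp3
      rw [harmonicNum2] at this
      refine this.of_eq (Finset.sum_congr rfl fun k hk => ?_)
      rw [div_pow, one_pow]
    exact PP.sub hp h1 h2
  have hPP2 : PP p 2 (2 * harmonicNum (p-1)) := by
    rw [h2H]
    exact (PP.p_mul hsum).of_eq rfl
  have h2inv : PI p (1/(2:ℚ)) := by
    have := PI.inv_nat hp (by norm_num : 0 < 2) (by omega)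
    simpa using this
  have := PP.mul_pi hp hPP2 h2inv
  exact this.of_eq (by ring)

end wolst



section assembly

variable {p : ℕ}

lemma hq_exact (hp : p.Prime) {a : ℕ} (h1 : 1 ≤ a) (h2 : a < p) :
    (fermatQuotient p a : ℚ) * p = (a:ℚ)^(p-1) - 1 := by
  have hk : ¬ p ∣ a := fun h => by have := Nat.le_of_dvd (by omega) h; omega
  have hd := fermat_dvd hp hk
  have h := Int.ediv_mul_cancel hd
  rw [fermatQuotient]
  exact_mod_cast h

lemma hW_exact (hp : p.Prime) : (wilsonQuotient p : ℚ) * p = ((p-1).factorial : ℚ) + 1 := by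
  haveI : Fact p.Prime := ⟨hp⟩
  have hd : (p:ℤ) ∣ ((p-1).factorial : ℤ) + 1 := by
    rw [← ZMod.intCast_zmod_eq_zero_iff_dvd]
    push_cast
    rw [ZMod.wilsons_lemma]
    ring
  have h := Int.ediv_mul_cancel hd
  rw [wilsonQuotient]
  exact_mod_cast h

lemma main_cong (hp : p.Prime) (hp3 : 3 < p) :
    PP p 2 ((wilsonQuotient p : ℚ)
      - ((∑ a ∈ Icc 1 (p-1), fermatQuotient p a : ℤ) : ℚ)
      + (p:ℚ) * ∑ a ∈ Icc 1 (p-1), harmonicNum a * (fermatQuotient p a : ℚ)) := by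
  set n := p - 1 with hn
  have hnq : ((n:ℕ):ℚ) = (p:ℚ) - 1 := by
    rw [hn]
    push_cast [Nat.cast_sub (by omega : 1 ≤ p)]
    ring
  have heven : Even n := Nat.Odd.sub_odd (hp.odd_of_ne_two (by omega)) odd_one
  -- abbreviations
  set W : ℚ := (wilsonQuotient p : ℚ) with hWdef
  set QQ : ℚ := ∑ a ∈ Icc 1 n, (fermatQuotient p a : ℚ) with hQQdef
  set X : ℚ := ∑ a ∈ Icc 1 n, harmonicNum a * (fermatQuotient p a : ℚ) with hXdef
  set SH : ℚ := ∑ a ∈ Icc 1 n, harmonicNum a with hSHdef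
  set SS : ℚ := ∑ a ∈ Icc 1 n, ((harmonicNum a ^ 2 - harmonicNum2 a)/2) with hSSdef
  set SQ : ℚ := ∑ a ∈ Icc 1 n, ((harmonicNum a ^ 2 - harmonicNum2 a)/2) * (fermatQuotient p a : ℚ)
    with hSQdef
  set Hn : ℚ := harmonicNum n with hHndef
  set H2n : ℚ := harmonicNum2 n with hH2ndef
  -- Step A specialized
  have hA : ∑ a ∈ Icc 1 n, (-1:ℚ)^a * ((n.choose a):ℚ) * (a:ℚ)^n = n.factorial := by
    have h := alt_sum_pow n
    have hins : range (n+1) = insert 0 (Icc 1 n) := by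
      ext x
      simp only [Finset.mem_range, Finset.mem_insert, Finset.mem_Icc]
      omega
    rw [hins, Finset.sum_insert (by simp)] at h
    simp only [Nat.cast_zero, zero_pow (by omega : n ≠ 0), mul_zero, zero_add] at h
    rw [← h]
    refine Finset.sum_congr rfl fun a ha => ?_
    simp only [Finset.mem_Icc] at ha
    have hsgn : (-1:ℚ)^(n-a) = (-1:ℚ)^a := by
      have h1 : ((-1:ℚ))^a * (-1:ℚ)^a = 1 := by
        rw [← pow_add]
        exact Even.neg_one_pow ⟨a, rfl⟩
      calc (-1:ℚ)^(n-a) = (-1:ℚ)^(n-a) * ((-1:ℚ)^a * (-1:ℚ)^a) := by rw [h1, mul_one]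
        _ = (-1:ℚ)^(n-a+a) * (-1:ℚ)^a := by rw [← pow_add]; ring
        _ = (-1:ℚ)^n * (-1:ℚ)^a := by rw [Nat.sub_add_cancel ha.2]
        _ = (-1:ℚ)^a := by rw [Even.neg_one_pow heven, one_mul]
    rw [hsgn]
  -- Step B summed
  have hB : PP p 3 ((n.factorial : ℚ)
      - ∑ a ∈ Icc 1 n, (1 - (p:ℚ) * harmonicNum a
          + (p:ℚ)^2 * ((harmonicNum a ^ 2 - harmonicNum2 a)/2)) * (a:ℚ)^n) := by
    rw [← hA, ← Finset.sum_sub_distrib]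
    refine PP.sum hp fun a ha => ?_
    simp only [Finset.mem_Icc] at ha
    have hterm := PP.mul_pi hp (binom_cong hp hp3 (show a ≤ p - 1 from ha.2))
      (PI.pow hp (PI.natCast hp a) n)
    exact hterm.of_eq (by ring)
  -- expand a^n = 1 + p q_a
  have hexp : ∑ a ∈ Icc 1 n, (1 - (p:ℚ) * harmonicNum a
        + (p:ℚ)^2 * ((harmonicNum a ^ 2 - harmonicNum2 a)/2)) * (a:ℚ)^n
      = (∑ a ∈ Icc 1 n, (1:ℚ)) + (p:ℚ) * QQ - (p:ℚ) * SH - (p:ℚ)^2 * X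
        + (p:ℚ)^2 * SS + (p:ℚ)^3 * SQ := by
    rw [hQQdef, hXdef, hSHdef, hSSdef, hSQdef]
    simp only [Finset.mul_sum]
    rw [← Finset.sum_add_distrib, ← Finset.sum_sub_distrib, ← Finset.sum_sub_distrib,
      ← Finset.sum_add_distrib, ← Finset.sum_add_distrib]
    refine Finset.sum_congr rfl fun a ha => ?_
    simp only [Finset.mem_Icc] at ha
    have hq := hq_exact hp ha.1 (by omega)
    have han : (a:ℚ)^n = 1 + (p:ℚ) * (fermatQuotient p a : ℚ) := by
      rw [hn]
      linear_combination -hq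
    rw [han]
    ring
  have hcard : (∑ a ∈ Icc 1 n, (1:ℚ)) = (p:ℚ) - 1 := by
    rw [Finset.sum_const, Nat.card_Icc]
    simp only [nsmul_eq_mul, mul_one]
    rw [show n + 1 - 1 = n from rfl, hnq]
  -- sum identities, in terms of p
  have hSH' : SH = (p:ℚ) * Hn - ((p:ℚ) - 1) := by
    rw [hSHdef, hHndef, sum_harmonic n, hnq]
    ring
  have hSS' : SS = ((p:ℚ) * Hn^2 - (2*((p:ℚ)-1)+1) * Hn + 2*((p:ℚ)-1)
      - ((p:ℚ) * H2n - Hn))/2 := by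
    rw [hSSdef, hHndef, hH2ndef]
    rw [← Finset.sum_div]
    rw [Finset.sum_sub_distrib, sum_harmonic_sq n, sum_harmonic2 n, hnq]
    ring
  have hfact : (n.factorial : ℚ) = (p:ℚ) * W - 1 := by
    have := hW_exact hp
    rw [← hWdef, ← hn] at this
    linear_combination -this
  -- the p-integral error term
  have hV : PP p 1 (Hn - 1 - SS - (p:ℚ) * SQ) := by
    have hHnPI : PI p Hn := PI.harmonic hp (by omega)
    have hH2nPI : PI p H2n := PI.harmonic2 hp (by omega)
    have hhalf : PI p (1/(2:ℚ)) := by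
      have := PI.inv_nat hp (by norm_num : 0 < 2) (by omega)
      simpa using this
    have hHn2 : PP p 2 Hn := pp_wolstenholme hp hp3
    have hSQPI : PI p SQ := by
      refine PI.sum hp fun a ha => ?_
      simp only [Finset.mem_Icc] at ha
      have h1 : PI p (harmonicNum a) := PI.harmonic hp (by omega)
      have h2 : PI p (harmonicNum2 a) := PI.harmonic2 hp (by omega)
      have h3 : PI p (fermatQuotient p a : ℚ) := PI.intCast hp _
      have := PI.mul hp (PI.mul hp (PI.sub hp (PI.pow hp h1 2) h2) hhalf) h3
      exact this.of_eq (by ring)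
    -- 1 + SS = p + (p Hn² - 2(p-1) Hn - p H2n)/2
    have h1SS : Hn - 1 - SS - (p:ℚ) * SQ
        = Hn - (p:ℚ) * (1 + (Hn^2 - H2n)/2) + Hn * ((p:ℚ) - 1)
          - (p:ℚ) * SQ := by
      rw [hSS']
      ring
    rw [h1SS]
    have t1 : PP p 1 ((p:ℚ) * (1 + (Hn^2 - H2n)/2)) := by
      have hpi : PI p (1 + (Hn^2 - H2n)/2) := by
        have := PI.add hp (PI.one hp)
          (PI.mul hp (PI.sub hp (PI.pow hp hHnPI 2) hH2nPI) hhalf)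
        exact this.of_eq (by ring)
      have := PP.pk_mul_pi (k := 1) hp hpi
      exact this.of_eq (by rw [pow_one])
    have t2 : PP p 1 (Hn * ((p:ℚ) - 1)) := by
      have h2Hn : PP p 1 Hn := hHn2.mono (by omega)
      exact PP.mul_pi hp h2Hn (PI.sub hp (PI.natCast hp p) (PI.one hp))
    have t3 : PP p 1 ((p:ℚ) * SQ) := by
      have := PP.pk_mul_pi (k := 1) hp hSQPI
      exact this.of_eq (by rw [pow_one])
    exact PP.sub hp (PP.add hp (PP.sub hp (hHn2.mono (by omega)) t1) t2) t3
  -- put things together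
  have hPV : PP p 3 ((p:ℚ)^2 * (Hn - 1 - SS - (p:ℚ) * SQ)) := by
    have h1 := PP.p_mul hV
    have h2 := PP.p_mul h1
    exact h2.of_eq (by ring)
  have hB' : PP p 3 ((n.factorial : ℚ)
      - (((p:ℚ) - 1) + (p:ℚ) * QQ - (p:ℚ) * SH - (p:ℚ)^2 * X
        + (p:ℚ)^2 * SS + (p:ℚ)^3 * SQ)) := by
    refine hB.of_eq ?_
    rw [hexp, hcard]
  have hPU : PP p 3 ((p:ℚ) * (W - QQ + (p:ℚ) * X)) := by
    have := PP.sub hp hB' hPV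
    refine this.of_eq ?_
    linear_combination hfact + (p:ℚ) * hSH'
  have := PP.p_cancel hp (k := 2) hPU
  refine this.of_eq ?_
  rw [hQQdef]
  push_cast
  ring

end assembly

theorem stmt_16 (p : ℕ) (hp : p.Prime) (hp3 : 3 < p) :
    IsLerchPrime p ↔
      ratCongr p 1 (∑ a ∈ Icc 1 (p - 1), harmonicNum a * (fermatQuotient p a : ℚ)) 0 := by
  set X : ℚ := ∑ a ∈ Icc 1 (p - 1), harmonicNum a * (fermatQuotient p a : ℚ) with hXdef
  have hmain := main_cong hp hp3
  rw [← hXdef] at hmain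
  have hratX : ratCongr p 1 X 0 ↔ PP p 1 X := by
    constructor
    · rintro ⟨c, d, hd, he⟩
      refine ⟨c, d, hd, ?_⟩
      rw [sub_zero] at he
      rw [he]
      have hdne := d_ne hd
      field_simp
    · rintro ⟨c, d, hd, he⟩
      refine ⟨c, d, hd, ?_⟩
      rw [sub_zero]
      have hdne := d_ne hd
      field_simp
      linear_combination he
  rw [hratX, IsLerchPrime]
  constructor
  · intro hL
    have h1 : PP p 2 ((((∑ a ∈ Icc 1 (p-1), fermatQuotient p a : ℤ)) : ℚ)
        - ((wilsonQuotient p : ℤ) : ℚ)) :=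
      ((PP.int_iff hp).mpr hL).of_eq (by push_cast; ring)
    have h3 : PP p 2 ((p:ℚ) * X) := (PP.add hp hmain h1).of_eq (by ring)
    exact PP.p_cancel hp (k := 1) h3
  · intro hX
    have h1 : PP p 2 ((p:ℚ) * X) := PP.p_mul hX
    have h2 : PP p 2 (((wilsonQuotient p : ℤ) : ℚ)
        - (((∑ a ∈ Icc 1 (p-1), fermatQuotient p a : ℤ)) : ℚ)) :=
      (PP.sub hp hmain h1).of_eq (by ring)
    have h3 : PP p 2 (((wilsonQuotient p - ∑ a ∈ Icc 1 (p-1), fermatQuotient p a : ℤ)) : ℚ) :=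
      h2.of_eq (by push_cast; ring)
    have h4 := (PP.int_iff hp).mp h3
    have h5 : ((∑ a ∈ Icc 1 (p-1), fermatQuotient p a) - wilsonQuotient p : ℤ)
        = -((wilsonQuotient p - ∑ a ∈ Icc 1 (p-1), fermatQuotient p a : ℤ)) := by ring
    rw [h5]
    exact dvd_neg.mpr h4
end
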